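/- Let α > 1 be real and let ω ∈ ℝ. Then the series ∑_{k=0}^{∞} (-1)^k binom(α,k) e^{-ikω} converges absolutely and its sum equals (1 - e^{-iω})^α, where the power is the principal complex power (Complex.cpow, with 0^α = 0). -/

import Mathlib

open Complex Filter Topology

/-- The generalized binomial coefficient
`binom(α,k) = α(α-1)⋯(α-k+1)/k!` (with `binom(α,0)=1`). -/
noncomputable def gbinom (α : ℝ) (k : ℕ) : ℝ :=
  (∏ i ∈ Finset.range k, (α - i)) / (k.factorial : ℝ)


lemma gbinom_succ (α : ℝ) (k : ℕ) :
    gbinom α (k + 1) = gbinom α k * (α - k) / (k + 1) := by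
  have hk : (k.factorial : ℝ) ≠ 0 := Nat.cast_ne_zero.mpr k.factorial_ne_zero
  have hk1 : ((k : ℝ) + 1) ≠ 0 := by positivity
  simp only [gbinom, Finset.prod_range_succ, Nat.factorial_succ]
  push_cast
  rw [div_mul_eq_mul_div, div_div, mul_comm ((k:ℝ)+1) _]

lemma gbinom_step (α : ℝ) (hα : 1 < α) (m : ℕ) (hm : α ≤ m) :
    |gbinom α (m + 1)| * (((m:ℝ) + 2) * ((m:ℝ) + 3)) ≤
      |gbinom α m| * (((m:ℝ) + 1) * ((m:ℝ) + 2)) := by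
  have hnn : (0:ℝ) ≤ (m:ℝ) - α := by linarith
  have hm1 : (0:ℝ) < (m:ℝ) + 1 := by positivity
  rw [gbinom_succ, abs_div, abs_mul, abs_sub_comm, _root_.abs_of_nonneg hnn, _root_.abs_of_pos hm1,
    div_mul_eq_mul_div, div_le_iff₀ hm1]
  have hg : (0:ℝ) ≤ |gbinom α m| := abs_nonneg _
  have hA : (0:ℝ) ≤ |gbinom α m| * ((m:ℝ) + 2) := by positivity
  have hB : (0:ℝ) ≤ |gbinom α m| * (m:ℝ) * ((m:ℝ) + 2) := by positivity
  have hα1 : (0:ℝ) ≤ α - 1 := by linarith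
  nlinarith [hA, mul_nonneg hA hα1, mul_nonneg hB hα1]

lemma gbinom_abs_summable (α : ℝ) (hα : 1 < α) : Summable (fun k => |gbinom α k|) := by
  set K := ⌈α⌉₊ with hK
  have hαK : α ≤ K := Nat.le_ceil α
  set M := |gbinom α K| * (((K:ℝ) + 1) * ((K:ℝ) + 2)) with hM
  have key : ∀ k : ℕ, |gbinom α (K + k)| * (((K:ℝ) + k + 1) * ((K:ℝ) + k + 2)) ≤ M := by
    intro k
    induction k with
    | zero => simp [hM]
    | succ k ih =>
      refine le_trans ?_ ih
      have h1 : K + (k + 1) = (K + k) + 1 := by ring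
      have h2 := gbinom_step α hα (K + k) (le_trans hαK (by exact_mod_cast Nat.le_add_right K k))
      rw [h1]
      calc |gbinom α (K + k + 1)| * (((K:ℝ) + ((k+1:ℕ):ℝ) + 1) * ((K:ℝ) + ((k+1:ℕ):ℝ) + 2))
          = |gbinom α (K + k + 1)| * ((((K+k:ℕ):ℝ) + 2) * (((K+k:ℕ):ℝ) + 3)) := by
            push_cast; ring
        _ ≤ |gbinom α (K + k)| * ((((K+k:ℕ):ℝ) + 1) * (((K+k:ℕ):ℝ) + 2)) := h2
        _ = |gbinom α (K + k)| * (((K:ℝ) + k + 1) * ((K:ℝ) + k + 2)) := by push_cast; ring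
  have hsum2 : Summable (fun k : ℕ => M * (((k:ℝ) + 1) * ((k:ℝ) + 2))⁻¹) := by
    refine Summable.mul_left M ?_
    have h0 : Summable (fun n : ℕ => 1 / ((n:ℝ)) ^ 2) := by
      exact Real.summable_one_div_nat_pow.mpr one_lt_two
    have h1 : Summable (fun n : ℕ => 1 / (((n+1:ℕ)):ℝ) ^ 2) := (summable_nat_add_iff (f := fun n : ℕ => 1/(n:ℝ)^2) 1).mpr h0
    refine h1.of_nonneg_of_le (fun n => by positivity) (fun n => ?_)
    rw [one_div]
    refine inv_anti₀ (by positivity) ?_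
    push_cast
    nlinarith [Nat.cast_nonneg (α := ℝ) n]
  have hshift : Summable (fun k : ℕ => |gbinom α (K + k)|) := by
    refine hsum2.of_nonneg_of_le (fun k => abs_nonneg _) (fun k => ?_)
    have hpos : (0:ℝ) < ((K:ℝ) + k + 1) * ((K:ℝ) + k + 2) := by positivity
    have hpos2 : (0:ℝ) < ((k:ℝ) + 1) * ((k:ℝ) + 2) := by positivity
    have h3 : ((k:ℝ) + 1) * ((k:ℝ) + 2) ≤ ((K:ℝ) + k + 1) * ((K:ℝ) + k + 2) := by
      have : (0:ℝ) ≤ (K:ℝ) := Nat.cast_nonneg K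
      nlinarith [Nat.cast_nonneg (α := ℝ) k]
    calc |gbinom α (K + k)|
        = |gbinom α (K + k)| * (((K:ℝ) + k + 1) * ((K:ℝ) + k + 2)) *
            (((K:ℝ) + k + 1) * ((K:ℝ) + k + 2))⁻¹ := by field_simp
      _ ≤ M * (((K:ℝ) + k + 1) * ((K:ℝ) + k + 2))⁻¹ := by
          apply mul_le_mul_of_nonneg_right (key k) (by positivity)
      _ ≤ M * (((k:ℝ) + 1) * ((k:ℝ) + 2))⁻¹ := by
          have hMnn : 0 ≤ M := le_trans (by positivity) (key 0)
          exact mul_le_mul_of_nonneg_left (inv_anti₀ hpos2 h3) hMnn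
  have := (summable_nat_add_iff (f := fun k => |gbinom α k|) K).mp ?_
  · exact this
  · exact hshift.congr (fun k => by rw [Nat.add_comm])


noncomputable def F (β : ℂ) (w : ℂ) : ℂ := Complex.exp (β * Complex.log (1 + w))

lemma mem_slit {w : ℂ} (hw : w ∈ Metric.ball (0:ℂ) 1) : (1 + w) ∈ Complex.slitPlane := by
  rw [Metric.mem_ball, dist_zero_right] at hw
  have : |w.re| ≤ ‖w‖ := Complex.abs_re_le_norm w
  rw [Complex.mem_slitPlane_iff]
  left
  simp only [Complex.add_re, Complex.one_re]
  have h := abs_lt.mp (this.trans_lt hw)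
  linarith [h.1]

lemma one_add_ne {w : ℂ} (hw : w ∈ Metric.ball (0:ℂ) 1) : (1 + w) ≠ 0 :=
  Complex.slitPlane_ne_zero (mem_slit hw)

lemma F_hasDerivAt (β : ℂ) {w : ℂ} (hw : w ∈ Metric.ball (0:ℂ) 1) :
    HasDerivAt (F β) (β * F (β - 1) w) w := by
  have h1 : HasDerivAt (fun w : ℂ => 1 + w) 1 w := (hasDerivAt_id w).const_add 1
  have h2 : HasDerivAt (fun w : ℂ => Complex.log (1 + w)) (1 / (1 + w)) w :=
    h1.clog (mem_slit hw)
  have h3 := (h2.const_mul β).cexp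
  convert h3 using 1
  · rfl
  · rfl
  have hne := one_add_ne hw
  have hexp : Complex.exp (Complex.log (1 + w)) = 1 + w := Complex.exp_log hne
  simp only [F]
  rw [sub_mul, one_mul, Complex.exp_sub, hexp]
  field_simp

lemma F_iteratedDeriv (α : ℂ) (n : ℕ) :
    ∀ w ∈ Metric.ball (0:ℂ) 1,
      iteratedDeriv n (F α) w = (∏ i ∈ Finset.range n, (α - i)) * F (α - n) w := by
  induction n with
  | zero => intro w _; simp [iteratedDeriv_zero]
  | succ n ih =>
    intro w hw
    rw [iteratedDeriv_succ]
    have heq : (iteratedDeriv n (F α)) =ᶠ[nhds w]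
        (fun w => (∏ i ∈ Finset.range n, (α - i)) * F (α - n) w) := by
      filter_upwards [Metric.isOpen_ball.mem_nhds hw] with u hu using ih u hu
    rw [heq.deriv_eq]
    have hd := (F_hasDerivAt (α - n) hw).const_mul (∏ i ∈ Finset.range n, (α - i))
    rw [hd.deriv]
    rw [Finset.prod_range_succ]
    have : α - ((n:ℂ) + 1) = α - n - 1 := by ring
    push_cast
    rw [this]
    ring

lemma gbinom_cast (α : ℝ) (n : ℕ) :
    (gbinom α n : ℂ) = (∏ i ∈ Finset.range n, ((α:ℂ) - i)) / (n.factorial : ℂ) := by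
  simp only [gbinom]
  push_cast
  rfl

lemma binom_hasSum (α : ℝ) {w : ℂ} (hw : w ∈ Metric.ball (0:ℂ) 1) :
    HasSum (fun n : ℕ => (gbinom α n : ℂ) * w ^ n)
      (Complex.exp ((α:ℂ) * Complex.log (1 + w))) := by
  have hdiff : DifferentiableOn ℂ (F (α:ℂ)) (Metric.ball (0:ℂ) 1) := by
    intro u hu
    exact (F_hasDerivAt (α:ℂ) hu).differentiableAt.differentiableWithinAt
  have hw0 : (0:ℂ) ∈ Metric.ball (0:ℂ) 1 := by simp
  have H := Complex.hasSum_taylorSeries_on_ball hdiff hw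
  have hF0 : ∀ n : ℕ, iteratedDeriv n (F (α:ℂ)) 0 = ∏ i ∈ Finset.range n, ((α:ℂ) - i) := by
    intro n
    rw [F_iteratedDeriv (α:ℂ) n 0 hw0]
    simp [F]
  have : (F (α:ℂ)) w = Complex.exp ((α:ℂ) * Complex.log (1 + w)) := rfl
  rw [this] at H
  have hfun : (fun n : ℕ => (gbinom α n : ℂ) * w ^ n)
      = fun n : ℕ => (n.factorial : ℂ)⁻¹ • (w - 0) ^ n • iteratedDeriv n (F (α:ℂ)) 0 := by
    funext n
    rw [hF0 n, gbinom_cast, sub_zero, smul_eq_mul, smul_eq_mul]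
    field_simp
  rw [hfun]
  exact H


lemma main_aux (α : ℝ) (hα : 1 < α) (y : ℂ) (hy : ‖y‖ = 1) :
    ∑' k : ℕ, (gbinom α k : ℂ) * y ^ k = (1 + y) ^ (α : ℂ) := by
  have hbound := gbinom_abs_summable α hα
  have hIoo : Set.Ioo (0:ℝ) 1 ∈ 𝓝[<] (1:ℝ) :=
    Ioo_mem_nhdsLT_of_mem (by constructor <;> norm_num)
  -- Tannery
  have htend1 : Tendsto (fun x : ℝ => ∑' k : ℕ, (gbinom α k : ℂ) * ((x:ℂ) ^ k * y ^ k))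
      (𝓝[<] (1:ℝ)) (𝓝 (∑' k : ℕ, (gbinom α k : ℂ) * y ^ k)) := by
    apply tendsto_tsum_of_dominated_convergence hbound
    · intro k
      have hc : Continuous (fun x : ℝ => (gbinom α k : ℂ) * ((x:ℂ) ^ k * y ^ k)) := by
        continuity
      have := (hc.tendsto 1).mono_left (nhdsWithin_le_nhds (s := Set.Iio (1:ℝ)))
      simpa using this
    · filter_upwards [hIoo] with x hx k
      rw [norm_mul, norm_mul, norm_pow, norm_pow, hy, one_pow, mul_one, Complex.norm_real]
      have hx1 : ‖(x:ℂ)‖ ≤ 1 := by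
        rw [Complex.norm_real, Real.norm_eq_abs, abs_of_pos hx.1]; exact hx.2.le
      calc ‖gbinom α k‖ * ‖(x:ℂ)‖ ^ k ≤ ‖gbinom α k‖ * 1 := by
            exact mul_le_mul_of_nonneg_left (pow_le_one₀ (norm_nonneg _) hx1) (norm_nonneg _)
        _ = |gbinom α k| := by rw [mul_one, Real.norm_eq_abs]
  -- on Ioo the partial function equals the closed form
  have heq : ∀ᶠ x : ℝ in 𝓝[<] (1:ℝ),
      (∑' k : ℕ, (gbinom α k : ℂ) * ((x:ℂ) ^ k * y ^ k))
        = Complex.exp ((α:ℂ) * Complex.log (1 + (x:ℂ) * y)) := by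
    filter_upwards [hIoo] with x hx
    have hw : (x:ℂ) * y ∈ Metric.ball (0:ℂ) 1 := by
      rw [Metric.mem_ball, dist_zero_right, norm_mul, hy, mul_one, Complex.norm_real,
        Real.norm_eq_abs, abs_of_pos hx.1]
      exact hx.2
    have := (binom_hasSum α hw).tsum_eq
    rw [← this]
    exact tsum_congr fun k => by rw [mul_pow]
  -- limit of the closed form
  have htend2 : Tendsto (fun x : ℝ => Complex.exp ((α:ℂ) * Complex.log (1 + (x:ℂ) * y)))
      (𝓝[<] (1:ℝ)) (𝓝 ((1 + y) ^ (α : ℂ))) := by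
    by_cases hy1 : y = -1
    · subst hy1
      have hval : ((1:ℂ) + -1) ^ (α : ℂ) = 0 := by
        rw [add_neg_cancel]
        exact Complex.zero_cpow (by exact_mod_cast (by linarith : α ≠ 0))
      rw [hval]
      have heq2 : ∀ᶠ x : ℝ in 𝓝[<] (1:ℝ),
          Complex.exp ((α:ℂ) * Complex.log (1 + (x:ℂ) * -1))
            = (((1 - x) ^ α : ℝ) : ℂ) := by
        filter_upwards [hIoo] with x hx
        have h1x : (0:ℝ) < 1 - x := by linarith [hx.2]
        have hcast : (1:ℂ) + (x:ℂ) * -1 = ((1 - x : ℝ) : ℂ) := by push_cast; ring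
        rw [hcast, ← Complex.ofReal_log h1x.le,
          show ((α:ℂ) * ((Real.log (1-x) : ℝ) : ℂ)) = ((α * Real.log (1-x) : ℝ) : ℂ) by
            push_cast; ring,
          ← Complex.ofReal_exp]
        norm_cast
        rw [Real.rpow_def_of_pos h1x, mul_comm]
      have heq2' : (fun x : ℝ => (((1 - x) ^ α : ℝ) : ℂ)) =ᶠ[𝓝[<] (1:ℝ)]
          (fun x : ℝ => Complex.exp ((α:ℂ) * Complex.log (1 + (x:ℂ) * -1))) := by
        filter_upwards [heq2] with x h using h.symm
      refine Tendsto.congr' heq2' ?_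
      have hr : Tendsto (fun x : ℝ => (1 - x) ^ α) (𝓝[<] (1:ℝ)) (𝓝 0) := by
        have h0 : Tendsto (fun x : ℝ => 1 - x) (𝓝[<] (1:ℝ)) (𝓝 0) := by
          have h5 : Tendsto (fun x : ℝ => 1 - x) (𝓝 (1:ℝ)) (𝓝 0) := by
            simpa using (continuous_sub_left (1:ℝ)).tendsto 1
          exact h5.mono_left nhdsWithin_le_nhds
        have hc : ContinuousAt (fun t : ℝ => t ^ α) 0 :=
          Real.continuousAt_rpow_const 0 α (Or.inr (by linarith))
        have := hc.tendsto.comp h0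
        rwa [Real.zero_rpow (by linarith : α ≠ 0)] at this
      have := (Complex.continuous_ofReal.tendsto 0).comp hr
      simpa [Function.comp_def] using this
    · -- 1 + y in slit plane
      have hre : -1 ≤ y.re := by
        have h1 : |y.re| ≤ ‖y‖ := Complex.abs_re_le_norm y
        rw [hy] at h1
        linarith [(abs_le.mp h1).1]
      have hre' : 0 < 1 + y.re := by
        rcases lt_or_eq_of_le hre with h | h
        · linarith
        · exfalso
          apply hy1
          have h3 := Complex.sq_norm y
          rw [hy, one_pow] at h3
          rw [Complex.normSq_apply] at h3
          have him2 : y.im * y.im = 0 := by nlinarith [h3]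
          have him : y.im = 0 := mul_self_eq_zero.mp him2
          apply Complex.ext <;> simp [← h, him]
      have hslit : (1 + y) ∈ Complex.slitPlane := by
        rw [Complex.mem_slitPlane_iff]; left; simpa using hre'
      have hne : (1 : ℂ) + y ≠ 0 := Complex.slitPlane_ne_zero hslit
      have hc : ContinuousAt (fun x : ℝ => Complex.exp ((α:ℂ) * Complex.log (1 + (x:ℂ) * y))) 1 := by
        have hc2 : ContinuousAt (fun x : ℝ => (1:ℂ) + (x:ℂ) * y) 1 := by fun_prop
        have hlog := hc2.clog (by simpa using hslit)
        exact (continuousAt_const.mul hlog).cexp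
      have := hc.tendsto.mono_left (nhdsWithin_le_nhds (s := Set.Iio (1:ℝ)))
      simp only [Complex.ofReal_one, one_mul] at this
      rwa [show Complex.exp ((α:ℂ) * Complex.log (1 + y)) = (1 + y) ^ (α:ℂ) by
        rw [Complex.cpow_def_of_ne_zero hne, mul_comm]] at this
  exact tendsto_nhds_unique (htend1.congr' heq) htend2

/-- For real `α > 1` and `ω ∈ ℝ`, the series `∑ₖ (-1)^k binom(α,k) e^{-ikω}` converges
absolutely with sum `(1 - e^{-iω})^α` (principal complex power). -/
theorem stmt7 (α : ℝ) (hα : 1 < α) (ω : ℝ) :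
    Summable (fun k : ℕ =>
      ‖(-1 : ℂ) ^ k * (gbinom α k : ℂ) * Complex.exp (-(Complex.I * k * ω))‖) ∧
    ∑' k : ℕ, (-1 : ℂ) ^ k * (gbinom α k : ℂ) * Complex.exp (-(Complex.I * k * ω)) =
      (1 - Complex.exp (-(Complex.I * ω))) ^ (α : ℂ) := by
  set z : ℂ := Complex.exp (-(Complex.I * ω)) with hz
  have hzk : ∀ k : ℕ, Complex.exp (-(Complex.I * k * ω)) = z ^ k := by
    intro k
    rw [hz, ← Complex.exp_nat_mul]
    congr 1
    ring
  have hterm : ∀ k : ℕ, (-1 : ℂ) ^ k * (gbinom α k : ℂ) * Complex.exp (-(Complex.I * k * ω))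
      = (gbinom α k : ℂ) * (-z) ^ k := by
    intro k
    rw [hzk k, neg_pow]
    ring
  have hzabs : ‖z‖ = 1 := by
    rw [hz, Complex.norm_exp]
    simp
  have hb := gbinom_abs_summable α hα
  constructor
  · refine hb.congr fun k => ?_
    rw [hterm k, norm_mul, norm_pow, norm_neg, hzabs, one_pow, mul_one, Complex.norm_real,
      Real.norm_eq_abs]
  · rw [tsum_congr hterm, show (1 : ℂ) - z = 1 + (-z) by ring]
    exact main_aux α hα (-z) (by rw [norm_neg, hzabs])
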